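/- Let ε ∈ (0, 1/4) and let α, β ∈ [2ε, 1−2ε]. Then for any α̃ ∈ [α, α+ε²] and β̃ ∈ [β, β+ε²] with α̃, β̃ < 1, setting κ(a,b) = ((1−a²)(1−b²)/(a²b²))^{1/4} and ρ_out = √((1−α̃α)(1−β̃β))/(κ(α̃,β̃)·√(αβα̃β̃)), one has ρ_out < κ(α,β) + ε. -/

import Mathlib

lemma aux15 (ε a b : ℝ) (hε : 0 < ε) (hε4 : ε < 1/4) (ha1 : 2*ε ≤ a)
    (ha2 : a ≤ 1 - 2*ε) (h1 : a ≤ b) (h2 : b ≤ a + ε^2) (h3 : b < 1) :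
    (1 - b*a)^2 ≤ (1+ε^2/2) * ((1-a^2)*(1-b^2)) ∧ 0 < 1 - b*a ∧
      2*ε ≤ 1-a^2 ∧ ε ≤ 1-b^2 := by
  have ha0 : 0 < a := by linarith
  have hb0 : 0 < b := by linarith
  have ha1' : a < 1 := by linarith
  have hA : 2*ε ≤ 1 - a^2 := by nlinarith
  have hB : ε ≤ 1 - b^2 := by nlinarith
  refine ⟨?_, by nlinarith, hA, hB⟩
  have key : (b - a)^2 ≤ (ε^2/2) * ((1-a^2)*(1-b^2)) := by
    have hprod : (2*ε) * ε ≤ (1-a^2)*(1-b^2) :=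
      mul_le_mul hA hB hε.le (by linarith)
    nlinarith [sq_nonneg (b-a)]
  nlinarith [key]

lemma aux15b (ε α β : ℝ) (h0 : 0 < ε) (ha : 2*ε ≤ α) (hb : 2*ε ≤ β)
    (ha2 : α < 1) (hb2 : β < 1) :
    (1-α^2) * (1-β^2) ≤ 1 ∧ 16*ε^4 ≤ α^2*β^2 := by
  constructor
  · have k1 : 1-α^2 ≤ 1 := by nlinarith
    have k3 : 0 ≤ 1-β^2 := by nlinarith
    calc (1-α^2)*(1-β^2) ≤ 1*(1-β^2) := mul_le_mul_of_nonneg_right k1 k3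
      _ ≤ 1 := by nlinarith [sq_nonneg β]
  · have h1 : 4*ε^2 ≤ α^2 := by nlinarith
    have h2 : 4*ε^2 ≤ β^2 := by nlinarith
    calc 16*ε^4 = (4*ε^2)*(4*ε^2) := by ring
      _ ≤ α^2 * β^2 := mul_le_mul h1 h2 (by positivity) (by positivity)

lemma aux15c (ε K : ℝ) (h0 : 0 < ε) (hK0 : 0 < K) (h2 : 2*ε*K ≤ 1) :
    (1 + 4*ε^2) * K^2 ≤ (K+ε)^2 := by
  nlinarith [mul_nonneg (by positivity : (0:ℝ) ≤ 2*ε*K) (by linarith : (0:ℝ) ≤ 1 - 2*ε*K)]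

lemma aux15d (ε M : ℝ) (h0 : 0 < ε) (hM : 0 < M) :
    (1+ε^2/2)^2 * M < (1+4*ε^2)^2 * M := by
  apply mul_lt_mul_of_pos_right _ hM
  nlinarith [pow_pos h0 2, pow_pos h0 4]

theorem stmt15 (ε α β αt βt : ℝ) (hε : ε ∈ Set.Ioo (0:ℝ) (1/4))
    (hα : α ∈ Set.Icc (2*ε) (1 - 2*ε)) (hβ : β ∈ Set.Icc (2*ε) (1 - 2*ε))
    (hαt : αt ∈ Set.Icc α (α + ε ^ 2)) (hβt : βt ∈ Set.Icc β (β + ε ^ 2))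
    (hαt1 : αt < 1) (hβt1 : βt < 1) :
    Real.sqrt ((1 - αt * α) * (1 - βt * β)) /
        ((((1 - αt ^ 2) * (1 - βt ^ 2) / (αt ^ 2 * βt ^ 2)) ^ ((1 : ℝ) / 4)) *
          Real.sqrt (α * β * αt * βt))
      < ((1 - α ^ 2) * (1 - β ^ 2) / (α ^ 2 * β ^ 2)) ^ ((1 : ℝ) / 4) + ε := by
  obtain ⟨hε0, hε4⟩ := hε
  obtain ⟨hαl, hαr⟩ := hα
  obtain ⟨hβl, hβr⟩ := hβ
  obtain ⟨hαtl, hαtr⟩ := hαt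
  obtain ⟨hβtl, hβtr⟩ := hβt
  obtain ⟨hAkey, hAN, hA1, hAt1⟩ := aux15 ε α αt hε0 hε4 hαl hαr hαtl hαtr hαt1
  obtain ⟨hBkey, hBN, hB1, hBt1⟩ := aux15 ε β βt hε0 hε4 hβl hβr hβtl hβtr hβt1
  have hα0 : 0 < α := by linarith
  have hβ0 : 0 < β := by linarith
  have hαt0 : 0 < αt := by linarith
  have hβt0 : 0 < βt := by linarith
  set D : ℝ := (1 - α ^ 2) * (1 - β ^ 2) / (α ^ 2 * β ^ 2) with hD_def
  set Dt : ℝ := (1 - αt ^ 2) * (1 - βt ^ 2) / (αt ^ 2 * βt ^ 2) with hDt_def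
  set P : ℝ := α * β * αt * βt with hP_def
  set N : ℝ := (1 - αt * α) * (1 - βt * β) with hN_def
  set M : ℝ := ((1-α^2)*(1-αt^2)) * ((1-β^2)*(1-βt^2)) with hM_def
  have h1A : (0:ℝ) < 1 - α^2 := by linarith
  have h1At : (0:ℝ) < 1 - αt^2 := by linarith
  have h1B : (0:ℝ) < 1 - β^2 := by linarith
  have h1Bt : (0:ℝ) < 1 - βt^2 := by linarith
  have hD0 : 0 < D := by
    rw [hD_def]; exact div_pos (mul_pos h1A h1B) (by positivity)
  have hDt0 : 0 < Dt := by
    rw [hDt_def]; exact div_pos (mul_pos h1At h1Bt) (by positivity)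
  have hP0 : 0 < P := by rw [hP_def]; positivity
  have hM0 : 0 < M := by
    rw [hM_def]; exact mul_pos (mul_pos h1A h1At) (mul_pos h1B h1Bt)
  set K : ℝ := D ^ ((1:ℝ)/4) with hK_def
  set Kt : ℝ := Dt ^ ((1:ℝ)/4) with hKt_def
  have hK0 : 0 < K := Real.rpow_pos_of_pos hD0 _
  have hKt0 : 0 < Kt := Real.rpow_pos_of_pos hDt0 _
  have hK2 : K^2 = Real.sqrt D := by
    rw [hK_def, ← Real.rpow_natCast (D ^ ((1:ℝ)/4)) 2, ← Real.rpow_mul hD0.le,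
      Real.sqrt_eq_rpow]
    norm_num
  have hKt2 : Kt^2 = Real.sqrt Dt := by
    rw [hKt_def, ← Real.rpow_natCast (Dt ^ ((1:ℝ)/4)) 2, ← Real.rpow_mul hDt0.le,
      Real.sqrt_eq_rpow]
    norm_num
  -- K ≤ 1/(2ε)
  obtain ⟨hnum1, hden1⟩ := aux15b ε α β hε0 hαl hβl (by linarith) (by linarith)
  have hDle : D ≤ (1/(2*ε))^(4:ℕ) := by
    have h3 : ((1/(2*ε))^(4:ℕ) : ℝ) = 1 / (16*ε^4) := by
      field_simp; ring
    rw [hD_def, h3]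
    exact div_le_div₀ zero_le_one hnum1 (by positivity) hden1
  have hK4 : K ≤ 1/(2*ε) := by
    calc K ≤ ((1/(2*ε))^(4:ℕ)) ^ ((1:ℝ)/4) :=
          Real.rpow_le_rpow hD0.le hDle (by norm_num)
      _ = 1/(2*ε) := by
          rw [← Real.rpow_natCast (1/(2*ε)) 4, ← Real.rpow_mul (by positivity)]
          norm_num
  -- reduce the goal
  rw [div_lt_iff₀ (by positivity), Real.sqrt_lt' (by positivity)]
  have hexp : ((K + ε) * (Kt * Real.sqrt P))^2 = (K+ε)^2 * (Real.sqrt Dt * P) := by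
    rw [mul_pow, mul_pow, Real.sq_sqrt hP0.le, hKt2]
  rw [hexp]
  -- identity K² (√Dt P) = √M
  have hDDP : D * (Dt * P^2) = M := by
    rw [hD_def, hDt_def, hP_def, hM_def]
    field_simp
  have hMeq : K^2 * (Real.sqrt Dt * P) = Real.sqrt M := by
    rw [hK2, ← hDDP, Real.sqrt_mul hD0.le, Real.sqrt_mul hDt0.le,
      Real.sqrt_sq hP0.le]
  -- step 1 : N < (1+4ε²) √M
  have hstep1 : N < (1 + 4*ε^2) * Real.sqrt M := by
    have hN0 : 0 < N := by rw [hN_def]; exact mul_pos hAN hBN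
    apply lt_of_pow_lt_pow_left₀ 2 (by positivity)
    have hRHS : ((1 + 4*ε^2) * Real.sqrt M)^2 = (1+4*ε^2)^2 * M := by
      rw [mul_pow, Real.sq_sqrt hM0.le]
    rw [hRHS]
    have h := mul_le_mul hAkey hBkey (sq_nonneg _) (by positivity)
    calc N^2 = (1 - αt*α)^2 * (1 - βt*β)^2 := by rw [hN_def]; ring
      _ ≤ ((1+ε^2/2) * ((1-α^2)*(1-αt^2))) * ((1+ε^2/2) * ((1-β^2)*(1-βt^2))) := h
      _ = (1+ε^2/2)^2 * M := by rw [hM_def]; ring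
      _ < (1+4*ε^2)^2 * M := aux15d ε M hε0 hM0
  -- step 2 : (1+4ε²) K² ≤ (K+ε)²
  have hstep2 : (1 + 4*ε^2) * K^2 ≤ (K+ε)^2 := by
    apply aux15c ε K hε0 hK0
    have h := mul_le_mul_of_nonneg_left hK4 (by positivity : (0:ℝ) ≤ 2*ε)
    calc 2*ε*K ≤ 2*ε*(1/(2*ε)) := h
      _ = 1 := by field_simp
  -- combine
  have hfin : (1 + 4*ε^2) * Real.sqrt M ≤ (K+ε)^2 * (Real.sqrt Dt * P) := by
    rw [← hMeq]
    have hQ : 0 ≤ Real.sqrt Dt * P := by positivity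
    calc (1 + 4*ε^2) * (K^2 * (Real.sqrt Dt * P))
        = ((1 + 4*ε^2) * K^2) * (Real.sqrt Dt * P) := by ring
      _ ≤ (K+ε)^2 * (Real.sqrt Dt * P) := mul_le_mul_of_nonneg_right hstep2 hQ
  linarith
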